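/- Let μ : K → ℝⁿ be continuous on a compact set K with |μ(p)|² ≥ s for all p ∈ K, let P(φ) be a function on K × ℝⁿ polynomial in φ with continuous coefficients, and ε > 0. Then |∫_K ∫_{ℝⁿ} P(p,φ) e^{i⟨μ(p),φ⟩ − (ε/2)|φ|²} dφ dm(p)| ≤ Q(ε^{1/2}, ε^{−1/2}) e^{−s/(2ε)} for some polynomial Q with nonnegative coefficients depending on K, m, and P, where m is a finite measure on K. -/

import Mathlib

open MeasureTheory RealInnerProductSpace

noncomputable section
namespace Stmt14Aux
open Complex

def gint (ε μ : ℝ) (k : ℕ) : ℂ :=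
  ∫ x : ℝ, (x : ℂ) ^ k * Complex.exp (-(ε / 2 : ℂ) * (x : ℂ) ^ 2 + (Complex.I * (μ : ℂ)) * (x : ℂ))

lemma norm_integrand (ε μ : ℝ) (k : ℕ) (x : ℝ) :
    ‖(x : ℂ) ^ k * Complex.exp (-(ε / 2 : ℂ) * (x : ℂ) ^ 2 + (Complex.I * (μ : ℂ)) * (x : ℂ))‖
      = |x| ^ k * Real.exp (-(ε / 2) * x ^ 2) := by
  have h : (-(ε / 2 : ℂ) * (x : ℂ) ^ 2 + (Complex.I * (μ : ℂ)) * (x : ℂ))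
      = Complex.ofReal (-(ε / 2) * x ^ 2) + Complex.ofReal (μ * x) * Complex.I := by
    push_cast; ring
  rw [norm_mul, norm_pow, Complex.norm_real, Real.norm_eq_abs, h,
    Complex.norm_exp]
  norm_num [Complex.add_re, Complex.ofReal_re, Complex.mul_re, Complex.I_re, Complex.I_im, Complex.ofReal_im]
  left; left; simp [← Complex.ofReal_pow]

lemma abs_pow_le (k : ℕ) (b : ℝ) (hb : 0 < b) (x : ℝ) :
    |x| ^ k ≤ (1 + k.factorial * b⁻¹ ^ k) * Real.exp (b * x ^ 2) := by
  have hexp : (b * x ^ 2) ^ k / k.factorial ≤ Real.exp (b * x ^ 2) := by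
    calc (b * x ^ 2) ^ k / k.factorial
        ≤ ∑ i ∈ Finset.range (k + 1), (b * x ^ 2) ^ i / i.factorial := by
          refine Finset.single_le_sum (f := fun i => (b * x ^ 2) ^ i / i.factorial) ?_ (Finset.self_mem_range_succ k)
          intro i _
          positivity
      _ ≤ Real.exp (b * x ^ 2) := Real.sum_le_exp_of_nonneg (by positivity) _
  have hx2 : |x| ^ k ≤ 1 + (x ^ 2) ^ k := by
    rcases le_total (|x|) 1 with h | h
    · have : |x| ^ k ≤ 1 := pow_le_one₀ (abs_nonneg x) h
      nlinarith [pow_nonneg (sq_nonneg x) k]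
    · have h1 : |x| ^ k ≤ (|x| ^ 2) ^ k := by
        rw [← pow_mul]
        exact pow_le_pow_right₀ h (by omega)
      rw [_root_.sq_abs] at h1
      linarith
  have h2 : (x ^ 2) ^ k ≤ k.factorial * b⁻¹ ^ k * Real.exp (b * x ^ 2) := by
    have hb' : (x ^ 2) ^ k = b⁻¹ ^ k * (b * x ^ 2) ^ k := by
      rw [mul_pow, ← mul_assoc, ← mul_pow, inv_mul_cancel₀ hb.ne', one_pow, one_mul]
    rw [hb']
    have := hexp
    have hfac : (0:ℝ) < k.factorial := by positivity
    rw [div_le_iff₀ hfac] at hexp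
    calc b⁻¹ ^ k * (b * x ^ 2) ^ k ≤ b⁻¹ ^ k * (Real.exp (b * x ^ 2) * k.factorial) := by
          gcongr
      _ = k.factorial * b⁻¹ ^ k * Real.exp (b * x ^ 2) := by ring
  have hexp1 : (1:ℝ) ≤ Real.exp (b * x ^ 2) := Real.one_le_exp (by positivity)
  calc |x| ^ k ≤ 1 + (x ^ 2) ^ k := hx2
    _ ≤ 1 * Real.exp (b * x ^ 2) + k.factorial * b⁻¹ ^ k * Real.exp (b * x ^ 2) := by
        refine add_le_add (by linarith) h2
    _ = (1 + k.factorial * b⁻¹ ^ k) * Real.exp (b * x ^ 2) := by ring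

lemma gint_integrable {ε : ℝ} (hε : 0 < ε) (μ : ℝ) (k : ℕ) :
    Integrable fun x : ℝ =>
      (x : ℂ) ^ k * Complex.exp (-(ε / 2 : ℂ) * (x : ℂ) ^ 2 + (Complex.I * (μ : ℂ)) * (x : ℂ)) := by
  have hmaj : Integrable fun x : ℝ =>
      (1 + k.factorial * (ε/4)⁻¹ ^ k) * Real.exp (-(ε / 4) * x ^ 2) :=
    (integrable_exp_neg_mul_sq (by positivity)).const_mul _
  refine hmaj.mono' ?_ ?_
  · apply Continuous.aestronglyMeasurable
    continuity
  · filter_upwards with x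
    rw [norm_integrand]
    have h1 : |x| ^ k ≤ (1 + k.factorial * (ε/4)⁻¹ ^ k) * Real.exp ((ε/4) * x ^ 2) :=
      abs_pow_le k (ε/4) (by positivity) x
    have h2 : Real.exp ((ε/4) * x ^ 2) * Real.exp (-(ε / 2) * x ^ 2)
        = Real.exp (-(ε / 4) * x ^ 2) := by
      rw [← Real.exp_add]; ring_nf
    calc |x| ^ k * Real.exp (-(ε / 2) * x ^ 2)
        ≤ ((1 + k.factorial * (ε/4)⁻¹ ^ k) * Real.exp ((ε/4) * x ^ 2)) *
            Real.exp (-(ε / 2) * x ^ 2) := by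
          have := Real.exp_pos (-(ε / 2) * x ^ 2)
          gcongr
      _ = (1 + k.factorial * (ε/4)⁻¹ ^ k) * Real.exp (-(ε / 4) * x ^ 2) := by
          rw [mul_assoc, h2]

lemma gint_zero {ε : ℝ} (hε : 0 < ε) (μ : ℝ) :
    gint ε μ 0 = (Real.sqrt (2 * Real.pi) * (Real.sqrt ε)⁻¹ : ℝ) *
      Complex.exp ((-(μ ^ 2) / (2 * ε) : ℝ)) := by
  have hb : (-(ε / 2 : ℂ)).re < 0 := by
    simp [Complex.neg_re, Complex.ofReal_re]
    positivity
  have := integral_cexp_quadratic hb (Complex.I * μ) 0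
  rw [gint]
  simp only [pow_zero, one_mul]
  have heq : (fun x : ℝ => Complex.exp (-(ε / 2 : ℂ) * (x : ℂ) ^ 2 + (Complex.I * (μ : ℂ)) * (x : ℂ)))
      = fun x : ℝ => Complex.exp (-(ε / 2 : ℂ) * (x : ℂ) ^ 2 + (Complex.I * (μ : ℂ)) * (x : ℂ) + 0) := by
    funext x; rw [add_zero]
  rw [heq, this]
  have h1 : (0 : ℂ) - (Complex.I * μ) ^ 2 / (4 * (-(ε / 2 : ℂ))) = ((-(μ ^ 2) / (2 * ε) : ℝ) : ℂ) := by
    have hε' : (ε : ℂ) ≠ 0 := Complex.ofReal_ne_zero.mpr hε.ne'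
    field_simp
    ring_nf
    simp [Complex.I_sq]
    field_simp
    ring
  rw [h1]
  congr 1
  have h2 : (Real.pi : ℂ) / (-(-(ε / 2 : ℂ))) = ((2 * Real.pi / ε : ℝ) : ℂ) := by
    push_cast
    rw [neg_neg]
    field_simp
  rw [h2]
  have h5 : Real.sqrt (2 * Real.pi) * (Real.sqrt ε)⁻¹ = Real.sqrt (2 * Real.pi / ε) := by
    rw [Real.sqrt_div (by positivity), div_eq_mul_inv]
  rw [h5]
  have h4 : Real.sqrt (2 * Real.pi / ε) = (2 * Real.pi / ε) ^ (1/2 : ℝ) := Real.sqrt_eq_rpow _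
  rw [h4, Complex.ofReal_cpow (by positivity)]
  norm_num

lemma gint_rec {ε : ℝ} (hε : 0 < ε) (μ : ℝ) (j : ℕ) :
    (ε : ℂ) * gint ε μ (j + 1) = Complex.I * μ * gint ε μ j + j * gint ε μ (j - 1) := by
  set E : ℝ → ℂ := fun x => Complex.exp (-(ε / 2 : ℂ) * (x : ℂ) ^ 2 + (Complex.I * (μ : ℂ)) * (x : ℂ)) with hE
  have hderiv : ∀ x : ℝ, HasDerivAt (fun x : ℝ => (x : ℂ) ^ j * E x)
      ((j : ℂ) * ((x : ℂ) ^ (j - 1) * E x) + Complex.I * μ * ((x : ℂ) ^ j * E x)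
        - (ε : ℂ) * ((x : ℂ) ^ (j + 1) * E x)) x := by
    intro x
    have h1 : HasDerivAt (fun x : ℝ => (x : ℂ) ^ j) ((j : ℂ) * (x : ℂ) ^ (j - 1)) x :=
      (hasDerivAt_pow j (x : ℂ)).comp_ofReal
    have h2 : HasDerivAt E ((-(ε : ℂ) * x + Complex.I * μ) * E x) x := by
      have hq : HasDerivAt (fun z : ℂ => -(ε / 2 : ℂ) * z ^ 2 + (Complex.I * (μ : ℂ)) * z)
          (-(ε : ℂ) * (x : ℂ) + Complex.I * μ) (x : ℂ) := by
        have := ((hasDerivAt_pow 2 (x : ℂ)).const_mul (-(ε / 2 : ℂ))).add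
          ((hasDerivAt_id (x : ℂ)).const_mul (Complex.I * (μ : ℂ)))
        refine this.congr_deriv ?_
        push_cast
        ring
      have h2' := (hq.cexp).comp_ofReal
      rw [hE]
      convert h2' using 1
      ring
    have := h1.mul h2
    refine this.congr_deriv ?_
    rw [pow_succ]
    ring
  have hint : ∀ k : ℕ, Integrable fun x : ℝ => (x : ℂ) ^ k * E x := fun k =>
    gint_integrable hε μ k
  have hf3 : Integrable (fun x : ℝ => (j : ℂ) * ((x : ℂ) ^ (j - 1) * E x)) := by
    exact (hint (j - 1)).const_mul _
  have hf4 : Integrable (fun x : ℝ => Complex.I * μ * ((x : ℂ) ^ j * E x)) := by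
    exact (hint j).const_mul _
  have hf1 : Integrable (fun x : ℝ => (j : ℂ) * ((x : ℂ) ^ (j - 1) * E x)
      + Complex.I * μ * ((x : ℂ) ^ j * E x)) := by
    exact hf3.add hf4
  have hf2 : Integrable (fun x : ℝ => (ε : ℂ) * ((x : ℂ) ^ (j + 1) * E x)) := by
    exact (hint (j + 1)).const_mul _
  have hint' : Integrable fun x : ℝ =>
      (j : ℂ) * ((x : ℂ) ^ (j - 1) * E x) + Complex.I * μ * ((x : ℂ) ^ j * E x)
        - (ε : ℂ) * ((x : ℂ) ^ (j + 1) * E x) := by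
    exact hf1.sub hf2
  have hzero := integral_eq_zero_of_hasDerivAt_of_integrable hderiv hint' (hint j)
  rw [integral_sub hf1 hf2, integral_add hf3 hf4,
    integral_const_mul, integral_const_mul, integral_const_mul] at hzero
  have hg : ∀ k : ℕ, (∫ x : ℝ, (x : ℂ) ^ k * E x) = gint ε μ k := fun k => rfl
  rw [hg, hg, hg] at hzero
  linear_combination -hzero

lemma gint_bound (k : ℕ) : ∃ C : ℝ, 0 ≤ C ∧ ∀ (ε μ : ℝ), 0 < ε →
    ‖gint ε μ k‖ ≤ C * ((Real.sqrt ε)⁻¹) ^ (k + 1)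
      * (1 + |μ| * (Real.sqrt ε)⁻¹) ^ k * Real.exp (-(μ ^ 2) / (2 * ε)) := by
  induction k using Nat.strong_induction_on with
  | _ k ih =>
    cases k with
    | zero =>
      refine ⟨Real.sqrt (2 * Real.pi), Real.sqrt_nonneg _, fun ε μ hε => ?_⟩
      have hval : ‖gint ε μ 0‖
          = Real.sqrt (2 * Real.pi) * (Real.sqrt ε)⁻¹ * Real.exp (-(μ ^ 2) / (2 * ε)) := by
        rw [gint_zero hε μ, norm_mul, Complex.norm_real, Real.norm_eq_abs,
          Complex.norm_exp, Complex.ofReal_re,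
          _root_.abs_of_nonneg (show (0:ℝ) ≤ Real.sqrt (2 * Real.pi) * (Real.sqrt ε)⁻¹ by positivity)]
      rw [hval]
      apply le_of_eq
      ring
    | succ j =>
      obtain ⟨C1, hC1n, hC1⟩ := ih j (by omega)
      obtain ⟨C2, hC2n, hC2⟩ := ih (j - 1) (by omega)
      refine ⟨C1 + j * C2, by positivity, fun ε μ hε => ?_⟩
      have hsq : 0 < Real.sqrt ε := Real.sqrt_pos.mpr hε
      set u : ℝ := (Real.sqrt ε)⁻¹ with hu
      have hu0 : 0 < u := by positivity
      have huu : u * u = ε⁻¹ := by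
        rw [← mul_inv]
        congr 1
        exact Real.mul_self_sqrt hε.le
      set P : ℝ := 1 + |μ| * u with hPdef
      have hP1 : 1 ≤ P := le_add_of_nonneg_right (by positivity)
      have hP0 : 0 ≤ P := by linarith
      have hμuP : |μ| * u ≤ P := by rw [hPdef]; linarith
      set B : ℝ := Real.exp (-(μ ^ 2) / (2 * ε)) with hB
      have hB0 : 0 ≤ B := (Real.exp_pos _).le
      have hεne : (ε : ℂ) ≠ 0 := Complex.ofReal_ne_zero.mpr hε.ne'
      have hrec := gint_rec hε μ j
      have hval : gint ε μ (j + 1)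
          = (ε : ℂ)⁻¹ * (Complex.I * μ * gint ε μ j + (j : ℂ) * gint ε μ (j - 1)) := by
        field_simp
        linear_combination hrec
      rw [hval, norm_mul]
      have h1 : ‖(ε : ℂ)⁻¹‖ = ε⁻¹ := by
        rw [norm_inv, Complex.norm_real, Real.norm_eq_abs, abs_of_pos hε]
      rw [h1]
      have h2 : ‖Complex.I * μ * gint ε μ j + (j : ℂ) * gint ε μ (j - 1)‖
          ≤ |μ| * ‖gint ε μ j‖ + (j : ℝ) * ‖gint ε μ (j - 1)‖ := by
        refine (norm_add_le _ _).trans ?_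
        have e1 : ‖Complex.I * μ * gint ε μ j‖ = |μ| * ‖gint ε μ j‖ := by
          rw [norm_mul, norm_mul, Complex.norm_I, one_mul, Complex.norm_real, Real.norm_eq_abs]
        have e2 : ‖(j : ℂ) * gint ε μ (j - 1)‖ = (j : ℝ) * ‖gint ε μ (j - 1)‖ := by
          rw [norm_mul, Complex.norm_natCast]
        rw [e1, e2]
      have hGj : |μ| * ‖gint ε μ j‖ ≤ C1 * u ^ j * P ^ (j + 1) * B := by
        calc |μ| * ‖gint ε μ j‖ ≤ |μ| * (C1 * u ^ (j + 1) * P ^ j * B) := by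
              exact mul_le_mul_of_nonneg_left (hC1 ε μ hε) (abs_nonneg μ)
          _ = C1 * u ^ j * (P ^ j * (|μ| * u)) * B := by ring
          _ ≤ C1 * u ^ j * (P ^ j * P) * B := by gcongr
          _ = C1 * u ^ j * P ^ (j + 1) * B := by ring
      have hGj' : (j : ℝ) * ‖gint ε μ (j - 1)‖ ≤ (j : ℝ) * C2 * u ^ j * P ^ (j + 1) * B := by
        rcases Nat.eq_zero_or_pos j with hj | hj
        · subst hj; simp
        · have hj1 : j - 1 + 1 = j := Nat.succ_pred_eq_of_pos hj
          calc (j : ℝ) * ‖gint ε μ (j - 1)‖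
              ≤ (j : ℝ) * (C2 * u ^ (j - 1 + 1) * P ^ (j - 1) * B) := by
                exact mul_le_mul_of_nonneg_left (hC2 ε μ hε) (Nat.cast_nonneg j)
            _ ≤ (j : ℝ) * (C2 * u ^ (j - 1 + 1) * P ^ (j + 1) * B) := by
                have : P ^ (j - 1) ≤ P ^ (j + 1) := pow_le_pow_right₀ hP1 (by omega)
                gcongr
            _ = (j : ℝ) * C2 * u ^ j * P ^ (j + 1) * B := by rw [hj1]; ring
      calc ε⁻¹ * ‖Complex.I * μ * gint ε μ j + (j : ℂ) * gint ε μ (j - 1)‖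
          ≤ ε⁻¹ * (|μ| * ‖gint ε μ j‖ + (j : ℝ) * ‖gint ε μ (j - 1)‖) := by
            exact mul_le_mul_of_nonneg_left h2 (by positivity)
        _ ≤ ε⁻¹ * (C1 * u ^ j * P ^ (j + 1) * B + (j : ℝ) * C2 * u ^ j * P ^ (j + 1) * B) := by
            exact mul_le_mul_of_nonneg_left (add_le_add hGj hGj') (by positivity)
        _ = (C1 + j * C2) * (ε⁻¹ * u ^ j) * P ^ (j + 1) * B := by ring
        _ = (C1 + j * C2) * u ^ (j + 1 + 1) * P ^ (j + 1) * B := by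
            rw [← huu]; ring

lemma exp_factor {n : ℕ} (ε : ℝ) (ν φ : EuclideanSpace ℝ (Fin n)) :
    Complex.exp (Complex.I * (⟪ν, φ⟫ : ℝ) - (ε / 2) * (‖φ‖ ^ 2 : ℝ))
      = ∏ i, Complex.exp (-(ε / 2 : ℂ) * (φ i : ℂ) ^ 2 + (Complex.I * ((ν i : ℝ) : ℂ)) * ((φ i : ℝ) : ℂ)) := by
  rw [← Complex.exp_sum]
  congr 1
  have hinner : (⟪ν, φ⟫ : ℝ) = ∑ i, ν i * φ i := by
    simp [PiLp.inner_apply, RCLike.inner_apply, conj_trivial]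
    exact Finset.sum_congr rfl fun i _ => mul_comm _ _
  have hnorm : (‖φ‖ ^ 2 : ℝ) = ∑ i, (φ i) ^ 2 := by
    rw [EuclideanSpace.norm_eq, Real.sq_sqrt (by positivity)]
    simp [Real.norm_eq_abs, sq_abs]
  rw [hinner, hnorm]
  push_cast
  rw [Finset.mul_sum, Finset.mul_sum, ← Finset.sum_sub_distrib]
  exact Finset.sum_congr rfl fun i _ => by ring

lemma inner_identity {n : ℕ} {ε : ℝ} (hε : 0 < ε) {d : ℕ} (a : Fin d → ℂ)
    (e : Fin d → Fin n → ℕ) (ν : EuclideanSpace ℝ (Fin n)) :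
    (∫ φ : EuclideanSpace ℝ (Fin n),
        (∑ j, a j * ∏ i, ((φ i : ℂ)) ^ (e j i))
          * Complex.exp (Complex.I * (⟪ν, φ⟫ : ℝ) - (ε / 2) * (‖φ‖ ^ 2 : ℝ)))
      = ∑ j, a j * ∏ i, gint ε (ν i) (e j i) := by
  have hform : ∀ φ : EuclideanSpace ℝ (Fin n),
      (∑ j, a j * ∏ i, ((φ i : ℂ)) ^ (e j i))
          * Complex.exp (Complex.I * (⟪ν, φ⟫ : ℝ) - (ε / 2) * (‖φ‖ ^ 2 : ℝ))
        = ∑ j, a j * ∏ i, (((φ i : ℂ)) ^ (e j i)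
            * Complex.exp (-(ε / 2 : ℂ) * (φ i : ℂ) ^ 2 + (Complex.I * ((ν i : ℝ) : ℂ)) * ((φ i : ℝ) : ℂ))) := by
    intro φ
    rw [exp_factor ε ν φ, Finset.sum_mul]
    exact Finset.sum_congr rfl fun j _ => by rw [mul_assoc, ← Finset.prod_mul_distrib]
  simp_rw [hform]
  have hmp := (EuclideanSpace.volume_preserving_symm_measurableEquiv_toLp (Fin n)).symm
  rw [← hmp.integral_comp (MeasurableEquiv.measurableEmbedding _)]
  simp only [MeasurableEquiv.symm_symm, MeasurableEquiv.toLp_apply,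
    WithLp.ofLp_toLp, volume_pi]
  rw [integral_finset_sum _ (fun j _ => (Integrable.fintype_prod
    (f := fun i (x : ℝ) => ((x : ℂ)) ^ (e j i)
      * Complex.exp (-(ε / 2 : ℂ) * (x : ℂ) ^ 2 + (Complex.I * ((ν i : ℝ) : ℂ)) * (x : ℂ)))
    (fun i => gint_integrable hε (ν i) (e j i))).const_mul _)]
  refine Finset.sum_congr rfl fun j _ => ?_
  rw [integral_const_mul, integral_fintype_prod_eq_prod (ι := Fin n)
    (f := fun i (x : ℝ) => ((x : ℂ)) ^ (e j i)
      * Complex.exp (-(ε / 2 : ℂ) * (x : ℂ) ^ 2 + (Complex.I * ((ν i : ℝ) : ℂ)) * (x : ℂ)))]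
  rfl

lemma norm_coord_le {n : ℕ} (ν : EuclideanSpace ℝ (Fin n)) (i : Fin n) : |ν i| ≤ ‖ν‖ := by
  have hnorm : ‖ν‖ ^ 2 = ∑ i, (ν i) ^ 2 := by
    rw [EuclideanSpace.norm_eq, Real.sq_sqrt (by positivity)]
    simp [Real.norm_eq_abs, sq_abs]
  have h1 : (ν i) ^ 2 ≤ ‖ν‖ ^ 2 := by
    rw [hnorm]
    exact Finset.single_le_sum (f := fun i => (ν i) ^ 2) (fun i _ => sq_nonneg _)
      (Finset.mem_univ i)
  calc |ν i| = Real.sqrt ((ν i) ^ 2) := (Real.sqrt_sq_eq_abs _).symm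
    _ ≤ Real.sqrt (‖ν‖ ^ 2) := Real.sqrt_le_sqrt h1
    _ = ‖ν‖ := Real.sqrt_sq (norm_nonneg ν)

lemma sum_sq_coords {n : ℕ} (ν : EuclideanSpace ℝ (Fin n)) : ∑ i, (ν i) ^ 2 = ‖ν‖ ^ 2 := by
  rw [EuclideanSpace.norm_eq, Real.sq_sqrt (by positivity)]
  simp [Real.norm_eq_abs, sq_abs]

lemma one_add_pow_le (L : ℕ) {u : ℝ} (hu : 0 ≤ u) : (1 + u) ^ L ≤ 2 ^ L * (1 + u ^ L) := by
  have h1 : (1 + u) ^ L ≤ (2 * max 1 u) ^ L := by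
    apply pow_le_pow_left₀ (by positivity)
    have := le_max_left (1:ℝ) u
    have := le_max_right (1:ℝ) u
    linarith
  have h2 : (max 1 u) ^ L ≤ 1 + u ^ L := by
    rcases le_total u 1 with h | h
    · rw [max_eq_left h]
      simp
      positivity
    · rw [max_eq_right h]
      nlinarith [pow_nonneg hu L]
  calc (1 + u) ^ L ≤ (2 * max 1 u) ^ L := h1
    _ = 2 ^ L * (max 1 u) ^ L := by rw [mul_pow]
    _ ≤ 2 ^ L * (1 + u ^ L) := by gcongr

end Stmt14Aux
end


open Stmt14Aux in
/-- Let `μ : K → ℝⁿ` be continuous on a compact set `K` with `|μ(p)|² ≥ s`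
for all `p ∈ K`, let `P(p,φ)` be polynomial in `φ` with continuous coefficients
(`P(p,φ) = ∑_j c_j(p) φ^{e_j}`), let `m` be a finite measure on `K`, and let `ε > 0`.
Then `|∫_K ∫_{ℝⁿ} P(p,φ) e^{i⟨μ(p),φ⟩ − (ε/2)|φ|²} dφ dm(p)|` is bounded by
`Q(ε^{1/2}, ε^{−1/2}) e^{−s/(2ε)}` for a Laurent polynomial `Q` in `√ε` with nonnegative
coefficients depending only on `K`, `m`, and `P`. -/
theorem stmt14 {n : ℕ}
    {K : Type*} [TopologicalSpace K] [CompactSpace K] [MeasurableSpace K] [BorelSpace K]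
    (m : Measure K) [IsFiniteMeasure m]
    (μ : K → EuclideanSpace ℝ (Fin n)) (hμ : Continuous μ)
    (s : ℝ) (hs : ∀ p, s ≤ ‖μ p‖ ^ 2)
    (d : ℕ) (c : Fin d → K → ℂ) (hc : ∀ j, Continuous (c j))
    (e : Fin d → Fin n → ℕ) :
    ∃ (N : ℕ) (a : Fin N → ℝ) (k : Fin N → ℤ),
      (∀ j, 0 ≤ a j) ∧
      ∀ ε : ℝ, 0 < ε →
        ‖∫ p, (∫ φ : EuclideanSpace ℝ (Fin n),
            (∑ j, c j p * ∏ i, ((φ i : ℂ)) ^ (e j i))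
              * Complex.exp (Complex.I * (⟪μ p, φ⟫ : ℝ) - (ε / 2) * (‖φ‖ ^ 2 : ℝ)))
          ∂m‖
        ≤ (∑ j, a j * (Real.sqrt ε) ^ (k j)) * Real.exp (-s / (2 * ε)) := by
  classical
  obtain ⟨M0, hM0⟩ := (isCompact_range (continuous_norm.comp hμ)).bddAbove
  set M : ℝ := max M0 0 with hMdef
  have hMle : ∀ p, ‖μ p‖ ≤ M := fun p => le_trans (hM0 ⟨p, rfl⟩) (le_max_left _ _)
  have hM0' : 0 ≤ M := le_max_right _ _
  have hccex : ∀ j : Fin d, ∃ Cc : ℝ, 0 ≤ Cc ∧ ∀ p, ‖c j p‖ ≤ Cc := by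
    intro j
    obtain ⟨C0, hC0⟩ := (isCompact_range (continuous_norm.comp (hc j))).bddAbove
    exact ⟨max C0 0, le_max_right _ _, fun p => le_trans (hC0 ⟨p, rfl⟩) (le_max_left _ _)⟩
  choose Cc hCc0 hCc using hccex
  choose Cg hCg0 hCg using Stmt14Aux.gint_bound
  set L : ℕ := n + 2 * (Finset.univ.sup fun j : Fin d => ∑ i, e j i) with hLdef
  set D : ℝ := ∑ j : Fin d, Cc j * ((∏ i, Cg (e j i)) * (1 + M) ^ (∑ i, e j i)) with hDdef
  have hD0 : 0 ≤ D := Finset.sum_nonneg fun j _ => by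
    have h1 : (0:ℝ) ≤ ∏ i, Cg (e j i) := Finset.prod_nonneg fun i _ => hCg0 _
    have := hCc0 j
    positivity
  set A : ℝ := (m Set.univ).toReal * (D * 2 ^ L) with hAdef
  have hA0 : 0 ≤ A := by positivity
  refine ⟨2, ![A, A], ![0, -(L : ℤ)], ?_, ?_⟩
  · intro j
    fin_cases j <;> simpa using hA0
  intro ε hε
  have hsq : 0 < Real.sqrt ε := Real.sqrt_pos.mpr hε
  set u : ℝ := (Real.sqrt ε)⁻¹ with hu
  have hu0 : 0 < u := by positivity
  have hexps : ∀ p, Real.exp (-‖μ p‖ ^ 2 / (2 * ε)) ≤ Real.exp (-s / (2 * ε)) := by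
    intro p
    apply Real.exp_le_exp.mpr
    exact (div_le_div_iff_of_pos_right (by positivity)).mpr (by linarith [hs p])
  have hpoint : ∀ p : K, ‖∫ φ : EuclideanSpace ℝ (Fin n),
      (∑ j, c j p * ∏ i, ((φ i : ℂ)) ^ (e j i))
        * Complex.exp (Complex.I * (⟪μ p, φ⟫ : ℝ) - (ε / 2) * (‖φ‖ ^ 2 : ℝ))‖
      ≤ D * (1 + u) ^ L * Real.exp (-s / (2 * ε)) := by
    intro p
    rw [Stmt14Aux.inner_identity hε (fun j => c j p) e (μ p)]
    refine (norm_sum_le _ _).trans ?_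
    have hterm : ∀ j : Fin d, ‖c j p * ∏ i, gint ε (μ p i) (e j i)‖
        ≤ Cc j * ((∏ i, Cg (e j i)) * (1 + M) ^ (∑ i, e j i))
          * ((1 + u) ^ L * Real.exp (-s / (2 * ε))) := by
      intro j
      rw [norm_mul, norm_prod]
      have hco : ∀ i : Fin n, ‖gint ε (μ p i) (e j i)‖
          ≤ (Cg (e j i) * (1 + M) ^ (e j i) * (1 + u) ^ (2 * e j i + 1))
            * Real.exp (-(μ p i) ^ 2 / (2 * ε)) := by
        intro i
        refine (hCg (e j i) ε (μ p i) hε).trans ?_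
        have hb1 : u ^ (e j i + 1) ≤ (1 + u) ^ (e j i + 1) :=
          pow_le_pow_left₀ hu0.le (by linarith) _
        have hb2 : (1 + |μ p i| * u) ^ (e j i) ≤ ((1 + M) * (1 + u)) ^ (e j i) := by
          apply pow_le_pow_left₀ (by positivity)
          have h3 : |μ p i| ≤ M := (norm_coord_le (μ p) i).trans (hMle p)
          nlinarith
        calc Cg (e j i) * u ^ (e j i + 1) * (1 + |μ p i| * u) ^ (e j i)
              * Real.exp (-(μ p i) ^ 2 / (2 * ε))
            ≤ Cg (e j i) * (1 + u) ^ (e j i + 1) * ((1 + M) * (1 + u)) ^ (e j i)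
              * Real.exp (-(μ p i) ^ 2 / (2 * ε)) := by
              have hg0 := hCg0 (e j i)
              have he0 := (Real.exp_pos (-(μ p i) ^ 2 / (2 * ε))).le
              apply mul_le_mul_of_nonneg_right ?_ he0
              apply mul_le_mul (mul_le_mul_of_nonneg_left hb1 hg0) hb2 (by positivity) (by positivity)
          _ = (Cg (e j i) * (1 + M) ^ (e j i) * (1 + u) ^ (2 * e j i + 1))
              * Real.exp (-(μ p i) ^ 2 / (2 * ε)) := by
              rw [mul_pow]
              ring
      calc ‖c j p‖ * ∏ i, ‖gint ε (μ p i) (e j i)‖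
          ≤ Cc j * ∏ i, ((Cg (e j i) * (1 + M) ^ (e j i) * (1 + u) ^ (2 * e j i + 1))
              * Real.exp (-(μ p i) ^ 2 / (2 * ε))) := by
            apply mul_le_mul (hCc j p) (Finset.prod_le_prod (fun i _ => norm_nonneg _)
              (fun i _ => hco i)) (Finset.prod_nonneg fun i _ => norm_nonneg _) (hCc0 j)
        _ = (Cc j * ((∏ i, Cg (e j i)) * (1 + M) ^ (∑ i, e j i)))
              * ((1 + u) ^ (∑ i, (2 * e j i + 1)) * Real.exp (∑ i, -(μ p i) ^ 2 / (2 * ε))) := by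
            rw [Finset.prod_mul_distrib, Finset.prod_mul_distrib, Finset.prod_mul_distrib,
              Finset.prod_pow_eq_pow_sum, Finset.prod_pow_eq_pow_sum, Real.exp_sum]
            ring
        _ ≤ (Cc j * ((∏ i, Cg (e j i)) * (1 + M) ^ (∑ i, e j i)))
              * ((1 + u) ^ L * Real.exp (-s / (2 * ε))) := by
            have hc0 : 0 ≤ Cc j * ((∏ i, Cg (e j i)) * (1 + M) ^ (∑ i, e j i)) := by
              have h1 : (0:ℝ) ≤ ∏ i, Cg (e j i) := Finset.prod_nonneg fun i _ => hCg0 _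
              have := hCc0 j
              positivity
            apply mul_le_mul_of_nonneg_left ?_ hc0
            have hpow : (1 + u) ^ (∑ i, (2 * e j i + 1)) ≤ (1 + u) ^ L := by
              apply pow_le_pow_right₀ (by linarith)
              have hsum : ∑ i, (2 * e j i + 1) = n + 2 * ∑ i, e j i := by
                rw [Finset.sum_add_distrib, ← Finset.mul_sum]
                simp [Finset.card_univ]
                omega
              rw [hsum, hLdef]
              have : (∑ i, e j i) ≤ Finset.univ.sup fun j : Fin d => ∑ i, e j i :=
                Finset.le_sup (f := fun j : Fin d => ∑ i, e j i) (Finset.mem_univ j)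
              omega
            have hexp2 : Real.exp (∑ i, -(μ p i) ^ 2 / (2 * ε)) ≤ Real.exp (-s / (2 * ε)) := by
              have heq2 : ∑ i, -(μ p i) ^ 2 / (2 * ε) = -‖μ p‖ ^ 2 / (2 * ε) := by
                rw [← Finset.sum_div, Finset.sum_neg_distrib, sum_sq_coords]
              rw [heq2]
              exact hexps p
            apply mul_le_mul hpow hexp2 (Real.exp_pos _).le (by positivity)
    calc ∑ j, ‖c j p * ∏ i, gint ε (μ p i) (e j i)‖
        ≤ ∑ j : Fin d, Cc j * ((∏ i, Cg (e j i)) * (1 + M) ^ (∑ i, e j i))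
            * ((1 + u) ^ L * Real.exp (-s / (2 * ε))) :=
          Finset.sum_le_sum fun j _ => hterm j
      _ = D * (1 + u) ^ L * Real.exp (-s / (2 * ε)) := by
          rw [hDdef, Finset.sum_mul, Finset.sum_mul]
          exact Finset.sum_congr rfl fun j _ => by ring
  have houter := norm_integral_le_of_norm_le_const (μ := m) (Filter.Eventually.of_forall hpoint)
  have hsum2 : (∑ j : Fin 2, (![A, A] : Fin 2 → ℝ) j
        * Real.sqrt ε ^ ((![0, -(L : ℤ)] : Fin 2 → ℤ) j))
      = A * (1 + u ^ L) := by
    rw [Fin.sum_univ_two]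
    simp only [Matrix.cons_val_zero, Matrix.cons_val_one, Matrix.head_cons, zpow_zero, mul_one,
      zpow_neg, zpow_natCast]
    rw [← inv_pow, ← hu]
    ring
  rw [hsum2]
  calc ‖∫ p, (∫ φ : EuclideanSpace ℝ (Fin n),
          (∑ j, c j p * ∏ i, ((φ i : ℂ)) ^ (e j i))
            * Complex.exp (Complex.I * (⟪μ p, φ⟫ : ℝ) - (ε / 2) * (‖φ‖ ^ 2 : ℝ))) ∂m‖
      ≤ (D * (1 + u) ^ L * Real.exp (-s / (2 * ε))) * (m Set.univ).toReal := houter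
    _ ≤ (D * (2 ^ L * (1 + u ^ L)) * Real.exp (-s / (2 * ε))) * (m Set.univ).toReal := by
        apply mul_le_mul_of_nonneg_right ?_ ENNReal.toReal_nonneg
        apply mul_le_mul_of_nonneg_right ?_ (Real.exp_pos _).le
        exact mul_le_mul_of_nonneg_left (one_add_pow_le L hu0.le) hD0
    _ = (A * (1 + u ^ L)) * Real.exp (-s / (2 * ε)) := by
        rw [hAdef]
        ring
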